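/- Let k ≥ 1 and n ≥ 2 be integers. Let V₁, …, V_k be pairwise disjoint sets with union V, where for each i ∈ {1,…,k} the set Vᵢ is enumerated as Vᵢ = {vᵢ¹, …, vᵢⁿ} with n pairwise distinct elements. For each i, let Bᵢ := {{vᵢ¹,…,vᵢ^j} : 1 ≤ j ≤ n} ∪ {{vᵢ^j} : 1 ≤ j ≤ n} be the hierarchy of the caterpillar tree on Vᵢ and B̃ᵢ := {{vᵢ^j,…,vᵢⁿ} : 1 ≤ j ≤ n} ∪ {{vᵢ^j} : 1 ≤ j ≤ n} the hierarchy of the reversed caterpillar. Let K be any binary hierarchy on {1,…,k}, and define H_C := {⋃_{t∈A} V_t : A ∈ K} ∪ ⋃_{i=1}^{k} Bᵢ and H_C̃ := {⋃_{t∈A} V_t : A ∈ K} ∪ ⋃_{i=1}^{k} B̃ᵢ (the hierarchies of the trees C and C̃ obtained by substituting the caterpillars, respectively the reversed caterpillars, for the leaves of the binary tree with hierarchy K). Then for every subset L ⊆ V and every hierarchy F on L the following two statements are equivalent: (i) |L| = 2k, H_C|L ⊆ F and H_C̃|L ⊆ F (i.e., the tree with hierarchy F has size 2k and is compatible with {C,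 C̃}); (ii) there exist, for each i ∈ {1,…,k}, two distinct elements aᵢ, bᵢ ∈ Vᵢ such that L = {a₁, b₁, a₂, b₂, …, a_k, b_k} and F = {⋃_{t∈A} {a_t, b_t} : A ∈ K} ∪ {{x} : x ∈ L}. -/

import Mathlib

/-- `F` is a hierarchy on `L`: a family of nonempty subsets of `L` containing `L`
itself and all singletons, and laminar (any two members are disjoint or nested). -/
def IsHierarchy {α : Type*} (L : Set α) (F : Set (Set α)) : Prop :=
  (∀ A ∈ F, A ⊆ L ∧ A.Nonempty) ∧ L ∈ F ∧ (∀ x ∈ L, {x} ∈ F) ∧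
    ∀ A ∈ F, ∀ B ∈ F, A ∩ B = ∅ ∨ A ⊆ B ∨ B ⊆ A

/-- The restriction `H|L := {A ∩ L : A ∈ H, A ∩ L ≠ ∅}` of a family of sets `H`
to a set `L`. -/
def restrictH {α : Type*} (H : Set (Set α)) (L : Set α) : Set (Set α) :=
  {S | ∃ A ∈ H, S = A ∩ L ∧ S.Nonempty}

lemma ncard_biUnion_fin {α ι : Type*} (t : Finset ι) (s : ι → Set α)
    (hfin : ∀ i, (s i).Finite)
    (hd : ∀ i ∈ t, ∀ j ∈ t, i ≠ j → Disjoint (s i) (s j)) :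
    (⋃ i ∈ t, s i).ncard = ∑ i ∈ t, (s i).ncard := by
  classical
  induction t using Finset.induction_on with
  | empty => simp
  | @insert a t ha ih =>
    have hdisj : Disjoint (s a) (⋃ i ∈ t, s i) := by
      rw [Set.disjoint_iUnion_right]
      intro i
      rw [Set.disjoint_iUnion_right]
      intro hi
      exact hd a (Finset.mem_insert_self a t) i (Finset.mem_insert_of_mem hi)
        (fun h => ha (h ▸ hi))
    have hbig : (⋃ i ∈ t, s i).Finite := Set.Finite.biUnion t.finite_toSet (fun i _ => hfin i)
    have heq : (⋃ i ∈ insert a t, s i) = s a ∪ ⋃ i ∈ t, s i := by simp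
    rw [Finset.sum_insert ha, heq, Set.ncard_union_eq hdisj (hfin a) hbig,
      ih (fun i hi j hj hij => hd i (Finset.mem_insert_of_mem hi) j (Finset.mem_insert_of_mem hj) hij)]

lemma laminar_ncard_le (m : ℕ) : ∀ {α : Type*} (L : Set α), L.Finite → L.ncard ≤ m →
    ∀ F : Set (Set α), (∀ A ∈ F, A ⊆ L ∧ A.Nonempty) →
    (∀ A ∈ F, ∀ B ∈ F, A ∩ B = ∅ ∨ A ⊆ B ∨ B ⊆ A) →
    F.ncard ≤ 2 * L.ncard - 1 := by
  induction m with
  | zero =>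
    intro α L hLfin hLm F hmem _
    have hL : L = ∅ := by
      rw [← Set.ncard_eq_zero hLfin]; omega
    have : F = ∅ := by
      ext A
      simp only [Set.mem_empty_iff_false, iff_false]
      intro hA
      obtain ⟨hsub, hne⟩ := hmem A hA
      subst hL
      exact hne.ne_empty (Set.subset_empty_iff.mp hsub)
    simp [this]
  | succ m ih =>
    intro α L hLfin hLm F hmem hlam
    have hFfin : F.Finite := hLfin.finite_subsets.subset (fun A hA => (hmem A hA).1)
    set F' : Set (Set α) := {A ∈ F | A ≠ L} with hF'def
    have hF'fin : F'.Finite := hFfin.subset (Set.sep_subset _ _)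
    rcases Set.eq_empty_or_nonempty F' with hF' | hF'
    · -- F ⊆ {L}
      have hsub : F ⊆ {L} := by
        intro A hA
        by_contra h
        have : A ∈ F' := ⟨hA, h⟩
        rw [hF'] at this
        exact this
      have h1 : F.ncard ≤ 1 := le_trans (Set.ncard_le_ncard hsub (Set.finite_singleton L))
        (le_of_eq (Set.ncard_singleton L))
      rcases Set.eq_empty_or_nonempty F with h | ⟨A, hA⟩
      · simp [h]
      · have : L.Nonempty := ((hmem A hA).2).mono (hmem A hA).1
        have : 1 ≤ L.ncard := Set.ncard_pos hLfin |>.mpr this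
        omega
    · -- pick maximal N in F'
      obtain ⟨N, hNF', hNmax⟩ := Set.Finite.exists_maximalFor Set.ncard F' hF'fin hF'
      have hNF : N ∈ F := hNF'.1
      have hNneL : N ≠ L := hNF'.2
      have hNsub : N ⊆ L := (hmem N hNF).1
      have hNssub : N ⊂ L := Set.ssubset_iff_subset_ne.mpr ⟨hNsub, hNneL⟩
      have hNne : N.Nonempty := (hmem N hNF).2
      have hNfin : N.Finite := hLfin.subset hNsub
      -- maximality: no B in F' with N ⊂ B
      have hmax : ∀ B ∈ F', N ⊆ B → B = N := by
        intro B hB hNB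
        have hBfin : B.Finite := hLfin.subset (hmem B hB.1).1
        have := hNmax (j := B) hB (Set.ncard_le_ncard hNB hBfin)
        by_contra h
        have : N ⊂ B := Set.ssubset_iff_subset_ne.mpr ⟨hNB, fun e => h e.symm⟩
        have := Set.ncard_lt_ncard this hBfin
        omega
      set F1 : Set (Set α) := {A ∈ F | A ⊆ N} with hF1
      set F2 : Set (Set α) := {A ∈ F | A ∩ N = ∅} with hF2
      have hFsplit : F ⊆ F1 ∪ F2 ∪ {L} := by
        intro A hA
        by_cases hAL : A = L
        · exact Or.inr (by simp [hAL])
        rcases hlam A hA N hNF with h | h | h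
        · exact Or.inl (Or.inr ⟨hA, h⟩)
        · exact Or.inl (Or.inl ⟨hA, h⟩)
        · left; left
          refine ⟨hA, ?_⟩
          have : A = N := hmax A ⟨hA, hAL⟩ h
          rw [this]
      -- bounds on F1, F2 via ih
      have hN_lt : N.ncard < L.ncard := Set.ncard_lt_ncard hNssub hLfin
      have hb1 : F1.ncard ≤ 2 * N.ncard - 1 := by
        refine ih N hNfin (by omega) F1 ?_ ?_
        · intro A hA; exact ⟨hA.2, (hmem A hA.1).2⟩
        · intro A hA B hB; exact hlam A hA.1 B hB.1
      have hLNfin : (L \ N).Finite := hLfin.diff (t := N)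
      have hcard_diff : (L \ N).ncard + N.ncard = L.ncard :=
        Set.ncard_diff_add_ncard_of_subset hNsub hLfin
      have hNpos : 1 ≤ N.ncard := Set.ncard_pos hNfin |>.mpr hNne
      have hb2 : F2.ncard ≤ 2 * (L \ N).ncard - 1 := by
        refine ih (L \ N) hLNfin (by omega) F2 ?_ ?_
        · intro A hA
          refine ⟨fun x hx => ⟨(hmem A hA.1).1 hx, ?_⟩, (hmem A hA.1).2⟩
          intro hxN
          have : x ∈ A ∩ N := ⟨hx, hxN⟩
          rw [hA.2] at this
          exact this
        · intro A hA B hB; exact hlam A hA.1 B hB.1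
      have hF1fin : F1.Finite := hFfin.subset (Set.sep_subset _ _)
      have hF2fin : F2.Finite := hFfin.subset (Set.sep_subset _ _)
      have hcard : F.ncard ≤ F1.ncard + F2.ncard + 1 := by
        calc F.ncard ≤ (F1 ∪ F2 ∪ {L}).ncard :=
              Set.ncard_le_ncard hFsplit ((hF1fin.union hF2fin).union (Set.finite_singleton L))
        _ ≤ (F1 ∪ F2).ncard + ({L} : Set (Set α)).ncard := Set.ncard_union_le _ _
        _ ≤ F1.ncard + F2.ncard + 1 := by
            have := Set.ncard_union_le F1 F2
            have : (({L} : Set (Set α))).ncard = 1 := Set.ncard_singleton L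
            have h2 := Set.ncard_union_le F1 F2
            omega
      -- A nonempty diff: 1 ≤ (L \ N).ncard since N ⊂ L
      have hdiffpos : 1 ≤ (L \ N).ncard := by
        obtain ⟨x, hxL, hxN⟩ := Set.exists_of_ssubset hNssub
        have : x ∈ L \ N := ⟨hxL, hxN⟩
        exact Set.ncard_pos hLNfin |>.mpr ⟨x, this⟩
      omega

lemma subset_pair_cases {α : Type*} {x y : α} {S : Set α} (h : S ⊆ {x, y}) (hne : S.Nonempty) :
    S = {x} ∨ S = {y} ∨ S = {x, y} := by
  by_cases hx : x ∈ S <;> by_cases hy : y ∈ S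
  · right; right
    refine Set.Subset.antisymm h ?_
    intro z hz
    simp only [Set.mem_insert_iff, Set.mem_singleton_iff] at hz
    rcases hz with rfl | rfl <;> assumption
  · left
    refine Set.Subset.antisymm ?_ (by simpa using hx)
    intro z hz
    have := h hz
    simp only [Set.mem_insert_iff, Set.mem_singleton_iff] at this
    rcases this with rfl | rfl
    · rfl
    · exact absurd hz hy
  · right; left
    refine Set.Subset.antisymm ?_ (by simpa using hy)
    intro z hz
    have := h hz
    simp only [Set.mem_insert_iff, Set.mem_singleton_iff] at this
    rcases this with rfl | rfl
    · exact absurd hz hx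
    · rfl
  · obtain ⟨z, hz⟩ := hne
    have := h hz
    simp only [Set.mem_insert_iff, Set.mem_singleton_iff] at this
    rcases this with rfl | rfl
    · exact absurd hz hx
    · exact absurd hz hy

theorem mct_control {α : Type*} (k n : ℕ) (hk : 1 ≤ k) (hn : 2 ≤ n)
    -- `v i j` is the element `vᵢ^j` of `Vᵢ`; all the `vᵢ^j` are pairwise distinct,
    -- which makes the sets `Vᵢ` pairwise disjoint, each of cardinality `n`
    (v : Fin k → Fin n → α)
    (hv : Function.Injective fun p : Fin k × Fin n => v p.1 p.2)
    -- `K` is a binary hierarchy on `{1, …, k}` (binary ⇔ it has `2k - 1` members)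
    (K : Set (Set (Fin k)))
    (hK : IsHierarchy Set.univ K ∧ K.ncard = 2 * k - 1) :
    let Vs : Fin k → Set α := fun i => Set.range (v i)
    let V : Set α := ⋃ i, Vs i
    -- the hierarchy `Bᵢ` of the caterpillar tree `Rₙ[vᵢ¹, …, vᵢⁿ]`
    let Bs : Fin k → Set (Set α) := fun i =>
      {S | ∃ j : Fin n, S = v i '' {t | t ≤ j}} ∪ {S | ∃ j : Fin n, S = {v i j}}
    -- the hierarchy `B̃ᵢ` of the reversed caterpillar tree `Rₙ[vᵢⁿ, …, vᵢ¹]`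
    let Bts : Fin k → Set (Set α) := fun i =>
      {S | ∃ j : Fin n, S = v i '' {t | j ≤ t}} ∪ {S | ∃ j : Fin n, S = {v i j}}
    -- the hierarchy of the tree `C` obtained by substituting the caterpillars
    -- for the leaves of the binary tree with hierarchy `K`
    let HC : Set (Set α) := {S | ∃ A ∈ K, S = ⋃ t ∈ A, Vs t} ∪ ⋃ i, Bs i
    -- the hierarchy of the tree `C̃` (with the reversed caterpillars)
    let HCt : Set (Set α) := {S | ∃ A ∈ K, S = ⋃ t ∈ A, Vs t} ∪ ⋃ i, Bts i
    ∀ L : Set α, L ⊆ V → ∀ F : Set (Set α), IsHierarchy L F →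
      ((L.ncard = 2 * k ∧ restrictH HC L ⊆ F ∧ restrictH HCt L ⊆ F) ↔
        (∃ a b : Fin k → α,
          (∀ i, a i ∈ Vs i ∧ b i ∈ Vs i ∧ a i ≠ b i) ∧
          L = ⋃ i, ({a i, b i} : Set α) ∧
          F = {S | ∃ A ∈ K, S = ⋃ t ∈ A, ({a t, b t} : Set α)} ∪
            {S | ∃ x ∈ L, S = {x}})) := by
  obtain ⟨⟨hKmem, hKuniv, hKsing, hKlam⟩, hKcard⟩ := hK
  intro Vs V Bs Bts HC HCt L hLV F hF
  obtain ⟨hFmem, hFL, hFsing, hFlam⟩ := hF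
  classical
  have hvij : ∀ {i i' : Fin k} {j j' : Fin n}, v i j = v i' j' → i = i' ∧ j = j' := by
    intro i i' j j' h
    have h2 : ((i, j) : Fin k × Fin n) = (i', j') := hv h
    exact ⟨congrArg Prod.fst h2, congrArg Prod.snd h2⟩
  have hVsfin : ∀ i, (Vs i).Finite := fun i => Set.finite_range _
  have hVsd : ∀ i j : Fin k, i ≠ j → Disjoint (Vs i) (Vs j) := by
    intro i j hij
    rw [Set.disjoint_left]
    rintro x ⟨t1, rfl⟩ ⟨t2, hx⟩
    exact hij (hvij hx).1.symm
  have hLfin : L.Finite := (Set.finite_iUnion hVsfin).subset hLV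
  constructor
  · rintro ⟨hcard, h2, h3⟩
    have claim3 : ∀ (i : Fin k) (j₁ j₂ j₃ : Fin n), j₁ < j₂ → j₂ < j₃ →
        v i j₁ ∈ L → v i j₂ ∈ L → v i j₃ ∈ L → False := by
      intro i j₁ j₂ j₃ h12 h23 m1 m2 m3
      set P := (v i '' {t | t ≤ j₂}) ∩ L with hP
      set S := (v i '' {t | j₂ ≤ t}) ∩ L with hS
      have hPF : P ∈ F := by
        apply h2
        refine ⟨v i '' {t | t ≤ j₂}, ?_, rfl, ⟨v i j₂, ⟨j₂, Set.mem_setOf.mpr (le_refl _), rfl⟩, m2⟩⟩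
        exact Or.inr (Set.mem_iUnion.mpr ⟨i, Or.inl ⟨j₂, rfl⟩⟩)
      have hSF : S ∈ F := by
        apply h3
        refine ⟨v i '' {t | j₂ ≤ t}, ?_, rfl, ⟨v i j₂, ⟨j₂, Set.mem_setOf.mpr (le_refl _), rfl⟩, m2⟩⟩
        exact Or.inr (Set.mem_iUnion.mpr ⟨i, Or.inl ⟨j₂, rfl⟩⟩)
      have keyP : ∀ t : Fin n, v i t ∈ v i '' {u | u ≤ j₂} → t ≤ j₂ := by
        rintro t ⟨u, hu, hq⟩
        rcases hvij hq with ⟨-, rfl⟩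
        exact hu
      have keyS : ∀ t : Fin n, v i t ∈ v i '' {u | j₂ ≤ u} → j₂ ≤ t := by
        rintro t ⟨u, hu, hq⟩
        rcases hvij hq with ⟨-, rfl⟩
        exact hu
      rcases hFlam P hPF S hSF with h | h | h
      · have : v i j₂ ∈ P ∩ S := ⟨⟨⟨j₂, Set.mem_setOf.mpr (le_refl _), rfl⟩, m2⟩, ⟨⟨j₂, Set.mem_setOf.mpr (le_refl _), rfl⟩, m2⟩⟩
        rw [h] at this
        exact this
      · have h1 : v i j₁ ∈ S := h ⟨⟨j₁, Set.mem_setOf.mpr (le_of_lt h12), rfl⟩, m1⟩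
        exact absurd h12 (not_lt.mpr (keyS j₁ h1.1))
      · have h1 : v i j₃ ∈ P := h ⟨⟨j₃, Set.mem_setOf.mpr (le_of_lt h23), rfl⟩, m3⟩
        exact absurd h23 (not_lt.mpr (keyP j₃ h1.1))
    have hle2 : ∀ i, (L ∩ Vs i).ncard ≤ 2 := by
      intro i
      by_contra hgt
      push_neg at hgt
      obtain ⟨t, htsub, ht3⟩ := Set.exists_subset_card_eq (show 3 ≤ (L ∩ Vs i).ncard by omega)
      obtain ⟨x, y, z, hxy, hxz, hyz, rfl⟩ := Set.ncard_eq_three.mp ht3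
      have hx := htsub (show x ∈ ({x, y, z} : Set α) by simp)
      have hy := htsub (show y ∈ ({x, y, z} : Set α) by simp)
      have hz := htsub (show z ∈ ({x, y, z} : Set α) by simp)
      obtain ⟨jx, hjx⟩ := hx.2
      obtain ⟨jy, hjy⟩ := hy.2
      obtain ⟨jz, hjz⟩ := hz.2
      have dxy : jx ≠ jy := fun h => hxy (by rw [← hjx, ← hjy, h])
      have dxz : jx ≠ jz := fun h => hxz (by rw [← hjx, ← hjz, h])
      have dyz : jy ≠ jz := fun h => hyz (by rw [← hjy, ← hjz, h])
      have mx : v i jx ∈ L := by rw [hjx]; exact hx.1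
      have my : v i jy ∈ L := by rw [hjy]; exact hy.1
      have mz : v i jz ∈ L := by rw [hjz]; exact hz.1
      rcases lt_trichotomy jx jy with h1 | h1 | h1
      · rcases lt_trichotomy jy jz with h2' | h2' | h2'
        · exact claim3 i jx jy jz h1 h2' mx my mz
        · exact absurd h2' dyz
        · rcases lt_trichotomy jx jz with h3' | h3' | h3'
          · exact claim3 i jx jz jy h3' h2' mx mz my
          · exact absurd h3' dxz
          · exact claim3 i jz jx jy h3' h1 mz mx my
      · exact absurd h1 dxy
      · rcases lt_trichotomy jx jz with h2' | h2' | h2'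
        · exact claim3 i jy jx jz h1 h2' my mx mz
        · exact absurd h2' dxz
        · rcases lt_trichotomy jy jz with h3' | h3' | h3'
          · exact claim3 i jy jz jx h3' h2' my mz mx
          · exact absurd h3' dyz
          · exact claim3 i jz jy jx h3' h1 mz my mx
    have hLU : L = ⋃ i, (L ∩ Vs i) := by
      ext x
      simp only [Set.mem_iUnion, Set.mem_inter_iff]
      constructor
      · intro hx
        obtain ⟨i, hi⟩ := Set.mem_iUnion.mp (hLV hx)
        exact ⟨i, hx, hi⟩
      · rintro ⟨i, hx, -⟩
        exact hx
    have hsum : ∑ i : Fin k, (L ∩ Vs i).ncard = 2 * k := by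
      have hd : ∀ i ∈ Finset.univ, ∀ j ∈ Finset.univ, i ≠ j →
          Disjoint (L ∩ Vs i) (L ∩ Vs j) :=
        fun i _ j _ hij => ((hVsd i j hij).mono Set.inter_subset_right Set.inter_subset_right)
      have hb := ncard_biUnion_fin Finset.univ (fun i => L ∩ Vs i)
        (fun i => hLfin.inter_of_left _) hd
      rw [show (⋃ i ∈ Finset.univ, (L ∩ Vs i)) = ⋃ i, (L ∩ Vs i) by simp] at hb
      rw [← hb, ← hLU, hcard]
    have heach : ∀ i, (L ∩ Vs i).ncard = 2 := by
      have h2k : (∑ _i : Fin k, 2) = 2 * k := by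
        rw [Finset.sum_const, Finset.card_univ, Fintype.card_fin, smul_eq_mul]
        ring
      have := (Finset.sum_eq_sum_iff_of_le
        (fun i (_ : i ∈ Finset.univ) => hle2 i)).mp (by rw [hsum, h2k])
      exact fun i => this i (Finset.mem_univ i)
    choose a b hne2 hset using fun i => Set.ncard_eq_two.mp (heach i)
    have haL : ∀ i, a i ∈ L ∧ a i ∈ Vs i := by
      intro i
      have : a i ∈ L ∩ Vs i := by rw [hset i]; exact Set.mem_insert _ _
      exact this
    have hbL : ∀ i, b i ∈ L ∧ b i ∈ Vs i := by
      intro i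
      have : b i ∈ L ∩ Vs i := by rw [hset i]; exact Set.mem_insert_of_mem _ rfl
      exact this
    have hLU2 : L = ⋃ i, ({a i, b i} : Set α) := by
      rw [hLU]
      exact Set.iUnion_congr hset
    have hbig : ∀ A ∈ K, (⋃ t ∈ A, ({a t, b t} : Set α)) ∈ F := by
      intro A hA
      obtain ⟨t0, ht0⟩ := (hKmem A hA).2
      have heq : (⋃ t ∈ A, Vs t) ∩ L = ⋃ t ∈ A, ({a t, b t} : Set α) := by
        ext x
        simp only [Set.mem_inter_iff, Set.mem_iUnion, exists_prop]
        constructor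
        · rintro ⟨⟨t, ht, hx⟩, hxL⟩
          refine ⟨t, ht, ?_⟩
          have hmem : x ∈ L ∩ Vs t := ⟨hxL, hx⟩
          rw [hset t] at hmem
          exact hmem
        · rintro ⟨t, ht, hx⟩
          have hmem : x ∈ L ∩ Vs t := by rw [hset t]; exact hx
          exact ⟨⟨t, ht, hmem.2⟩, hmem.1⟩
      apply h2
      refine ⟨⋃ t ∈ A, Vs t, Or.inl ⟨A, hA, rfl⟩, heq.symm, ?_⟩
      exact ⟨a t0, Set.mem_biUnion ht0 (Set.mem_insert _ _)⟩
    set G : Set (Set α) := {S | ∃ A ∈ K, S = ⋃ t ∈ A, ({a t, b t} : Set α)} ∪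
      {S | ∃ x ∈ L, S = {x}} with hGdef
    have hGF : G ⊆ F := by
      rintro S (⟨A, hA, rfl⟩ | ⟨x, hx, rfl⟩)
      · exact hbig A hA
      · exact hFsing x hx
    have hFfin : F.Finite :=
      Set.Finite.subset hLfin.finite_subsets (fun A hA => (hFmem A hA).1)
    have hinj : Set.InjOn (fun A => ⋃ t ∈ A, ({a t, b t} : Set α)) K := by
      have key : ∀ X Y : Set (Fin k),
          (⋃ t ∈ X, ({a t, b t} : Set α)) = (⋃ t ∈ Y, ({a t, b t} : Set α)) → X ⊆ Y := by
        intro X Y hXY t ht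
        have hmem : a t ∈ ⋃ s ∈ Y, ({a s, b s} : Set α) := by
          rw [← hXY]
          exact Set.mem_biUnion ht (Set.mem_insert _ _)
        obtain ⟨s, hs, hmem2⟩ := Set.mem_iUnion₂.mp hmem
        have hVss : a t ∈ Vs s := by
          rcases hmem2 with h | h
          · rw [h]; exact (haL s).2
          · rw [Set.mem_singleton_iff] at h
            rw [h]; exact (hbL s).2
        have hst : s = t := by
          by_contra hne
          exact Set.disjoint_left.mp (hVsd s t hne) hVss (haL t).2
        rwa [hst] at hs
      intro A hA A' hA' hEq
      exact Set.Subset.antisymm (key A A' hEq) (key A' A hEq.symm)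
    have hG1eq : {S | ∃ A ∈ K, S = ⋃ t ∈ A, ({a t, b t} : Set α)} =
        (fun A => ⋃ t ∈ A, ({a t, b t} : Set α)) '' K :=
      Set.ext fun S => ⟨fun ⟨A, hA, h⟩ => ⟨A, hA, h.symm⟩, fun ⟨A, hA, h⟩ => ⟨A, hA, h.symm⟩⟩
    have hG1 : ({S | ∃ A ∈ K, S = ⋃ t ∈ A, ({a t, b t} : Set α)} : Set (Set α)).ncard
        = 2 * k - 1 := by
      rw [hG1eq, Set.ncard_image_of_injOn hinj, hKcard]
    have hG2eq : {S | ∃ x ∈ L, S = {x}} = (fun x : α => ({x} : Set α)) '' L :=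
      Set.ext fun S => ⟨fun ⟨x, hx, h⟩ => ⟨x, hx, h.symm⟩, fun ⟨x, hx, h⟩ => ⟨x, hx, h.symm⟩⟩
    have hG2 : ({S | ∃ x ∈ L, S = {x}} : Set (Set α)).ncard = 2 * k := by
      rw [hG2eq, Set.ncard_image_of_injOn (fun x _ y _ h => by
        simpa using h), hcard]
    have hGdis : Disjoint ({S | ∃ A ∈ K, S = ⋃ t ∈ A, ({a t, b t} : Set α)} : Set (Set α))
        {S | ∃ x ∈ L, S = {x}} := by
      rw [Set.disjoint_left]
      rintro S ⟨A, hA, rfl⟩ ⟨x, hx, hxx⟩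
      obtain ⟨t0, ht0⟩ := (hKmem A hA).2
      have ha' : a t0 ∈ ({x} : Set α) := by
        rw [← hxx]; exact Set.mem_biUnion ht0 (Set.mem_insert _ _)
      have hb' : b t0 ∈ ({x} : Set α) := by
        rw [← hxx]; exact Set.mem_biUnion ht0 (Set.mem_insert_of_mem _ rfl)
      rw [Set.mem_singleton_iff] at ha' hb'
      exact hne2 t0 (ha'.trans hb'.symm)
    have hG1fin : ({S | ∃ A ∈ K, S = ⋃ t ∈ A, ({a t, b t} : Set α)} : Set (Set α)).Finite :=
      hFfin.subset (fun S hS => hGF (Or.inl hS))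
    have hG2fin : ({S | ∃ x ∈ L, S = {x}} : Set (Set α)).Finite :=
      hFfin.subset (fun S hS => hGF (Or.inr hS))
    have hGcard : G.ncard = 2 * (2 * k) - 1 := by
      rw [hGdef, Set.ncard_union_eq hGdis hG1fin hG2fin, hG1, hG2]
      omega
    have hFcard : F.ncard ≤ 2 * (2 * k) - 1 := by
      have := laminar_ncard_le L.ncard L hLfin le_rfl F hFmem hFlam
      rwa [hcard] at this
    have hFG : F = G := (Set.eq_of_subset_of_ncard_le hGF (by omega) hFfin).symm
    exact ⟨a, b, fun i => ⟨(haL i).2, (hbL i).2, hne2 i⟩, hLU2, hFG⟩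
  · rintro ⟨a, b, hab, hLa, hFa⟩
    have haVs : ∀ i, a i ∈ Vs i := fun i => (hab i).1
    have hbVs : ∀ i, b i ∈ Vs i := fun i => (hab i).2.1
    have hneab : ∀ i, a i ≠ b i := fun i => (hab i).2.2
    have haL : ∀ i, a i ∈ L := by
      intro i
      rw [hLa]
      exact Set.mem_iUnion.mpr ⟨i, Set.mem_insert _ _⟩
    have hbL : ∀ i, b i ∈ L := by
      intro i
      rw [hLa]
      exact Set.mem_iUnion.mpr ⟨i, Set.mem_insert_of_mem _ rfl⟩
    have hpairsub : ∀ i, ({a i, b i} : Set α) ⊆ Vs i := by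
      intro i x hx
      simp only [Set.mem_insert_iff, Set.mem_singleton_iff] at hx
      rcases hx with rfl | rfl
      · exact haVs i
      · exact hbVs i
    have hLcap : ∀ i, L ∩ Vs i = {a i, b i} := by
      intro i
      ext x
      simp only [Set.mem_inter_iff, hLa, Set.mem_iUnion]
      constructor
      · rintro ⟨⟨j, hxj⟩, hxi⟩
        by_cases hij : i = j
        · subst hij; exact hxj
        · exact absurd hxi
            (Set.disjoint_left.mp (hVsd j i fun h => hij h.symm) (hpairsub j hxj))
      · intro hx
        exact ⟨⟨i, hx⟩, hpairsub i hx⟩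
    have hcard : L.ncard = 2 * k := by
      have hd : ∀ i ∈ Finset.univ, ∀ j ∈ Finset.univ, i ≠ j →
          Disjoint ({a i, b i} : Set α) ({a j, b j} : Set α) :=
        fun i _ j _ hij => (hVsd i j hij).mono (hpairsub i) (hpairsub j)
      have hfin2 : ∀ i, ({a i, b i} : Set α).Finite := fun i => (Set.finite_singleton _).insert _
      have hb := ncard_biUnion_fin Finset.univ (fun i => ({a i, b i} : Set α)) hfin2 hd
      rw [show (⋃ i ∈ Finset.univ, ({a i, b i} : Set α)) = ⋃ i, ({a i, b i} : Set α) by simp]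
        at hb
      rw [hLa, hb, Finset.sum_congr rfl (fun i _ => Set.ncard_pair (hneab i)),
        Finset.sum_const, Finset.card_univ, Fintype.card_fin, smul_eq_mul]
      ring
    have hFpair : ∀ i, ({a i, b i} : Set α) ∈ F := by
      intro i
      rw [hFa]
      left
      refine ⟨{i}, hKsing i (Set.mem_univ i), ?_⟩
      simp
    have hsingF : ∀ x ∈ L, ({x} : Set α) ∈ F := by
      intro x hx
      rw [hFa]
      right
      exact ⟨x, hx, rfl⟩
    have hcat : ∀ (i : Fin k) (A' : Set α), A' ⊆ Vs i → (A' ∩ L).Nonempty → A' ∩ L ∈ F := by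
      intro i A' hsub hne
      have hsub2 : A' ∩ L ⊆ ({a i, b i} : Set α) := by
        intro x hx
        rw [← hLcap i]
        exact ⟨hx.2, hsub hx.1⟩
      rcases subset_pair_cases hsub2 hne with h | h | h
      · rw [h]; exact hsingF _ (haL i)
      · rw [h]; exact hsingF _ (hbL i)
      · rw [h]; exact hFpair i
    have hbigeq : ∀ A : Set (Fin k), (⋃ t ∈ A, Vs t) ∩ L = ⋃ t ∈ A, ({a t, b t} : Set α) := by
      intro A
      ext x
      simp only [Set.mem_inter_iff, Set.mem_iUnion, exists_prop]
      constructor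
      · rintro ⟨⟨t, ht, hx⟩, hxL⟩
        have hmem : x ∈ L ∩ Vs t := ⟨hxL, hx⟩
        rw [hLcap t] at hmem
        exact ⟨t, ht, hmem⟩
      · rintro ⟨t, ht, hx⟩
        have hmem : x ∈ L ∩ Vs t := by rw [hLcap t]; exact hx
        exact ⟨⟨t, ht, hmem.2⟩, hmem.1⟩
    refine ⟨hcard, ?_, ?_⟩
    · rintro S ⟨A', hA', hSeq, hne⟩
      subst hSeq
      rcases hA' with ⟨A, hA, rfl⟩ | hA'
      · rw [hbigeq A, hFa]
        left
        exact ⟨A, hA, rfl⟩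
      · obtain ⟨i, hBi⟩ := Set.mem_iUnion.mp hA'
        rcases hBi with ⟨j, rfl⟩ | ⟨j, rfl⟩
        · refine hcat i _ ?_ hne
          rintro x ⟨t, -, rfl⟩
          exact ⟨t, rfl⟩
        · refine hcat i _ ?_ hne
          intro x hx
          rw [Set.mem_singleton_iff] at hx
          subst hx
          exact ⟨j, rfl⟩
    · rintro S ⟨A', hA', hSeq, hne⟩
      subst hSeq
      rcases hA' with ⟨A, hA, rfl⟩ | hA'
      · rw [hbigeq A, hFa]
        left
        exact ⟨A, hA, rfl⟩
      · obtain ⟨i, hBi⟩ := Set.mem_iUnion.mp hA'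
        rcases hBi with ⟨j, rfl⟩ | ⟨j, rfl⟩
        · refine hcat i _ ?_ hne
          rintro x ⟨t, -, rfl⟩
          exact ⟨t, rfl⟩
        · refine hcat i _ ?_ hne
          intro x hx
          rw [Set.mem_singleton_iff] at hx
          subst hx
          exact ⟨j, rfl⟩
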